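/- Let (M, J, g) be a metallic pseudo-Riemannian manifold with twin metric G and ∇ a linear connection. If both (∇, g) and (∇, G) are Codazzi-coupled, then (∇*, J) is Codazzi-coupled, where ∇* is the g-conjugate connection of ∇. -/
import Mathlib


variable {A : Type*} [CommRing A] [Algebra ℝ A]
variable {V : Type*} [AddCommGroup V] [Module ℝ V] [Module A V] [IsScalarTower ℝ A V]

/-- Covariant derivative `(D_X T) Y` of a (1,1)-tensor field `T`. -/
def covT (D : V → V → V) (T : V → V) (X Y : V) : V := D X (T Y) - T (D X Y)

/-- `covM Dact D h X Y Z = (D_Z h)(X,Y)`, the covariant derivative of a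
(0,2)-tensor field `h`, where `Dact` is the action of vector fields on functions. -/
def covM (Dact : V → A → A) (D : V → V → V) (h : V → V → A) (X Y Z : V) : A :=
  Dact Z (h X Y) - h (D Z X) Y - h X (D Z Y)

/-- if (∇,g) and (∇,G) are Codazzi-coupled, then (∇*,J) is
Codazzi-coupled, where ∇* is the g-conjugate of ∇. -/
theorem conjugate_codazzi_J
    (Dact : V → A → A) (D Ds : V → V → V)
    (g : V →ₗ[A] V →ₗ[A] A) (J : V →ₗ[A] V) (p q : ℝ)
    (hsym : ∀ X Y, g X Y = g Y X)
    (hJsym : ∀ X Y, g (J X) Y = g X (J Y))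
    (hJ2 : ∀ X, J (J X) = p • J X + q • X)
    (hnd : ∀ X, (∀ Y, g X Y = 0) → X = 0)
    -- Ds is the g-conjugate of D
    (hDs : ∀ X Y Z, Dact Z (g X Y) = g (D Z X) Y + g X (Ds Z Y))
    -- (∇,g) Codazzi-coupled: (∇_X g)(Y,Z) = (∇_Z g)(X,Y)
    (hCodg : ∀ X Y Z, covM Dact D (fun a b => g a b) Y Z X
      = covM Dact D (fun a b => g a b) X Y Z)
    -- (∇,G) Codazzi-coupled
    (hCodG : ∀ X Y Z, covM Dact D (fun a b => g (J a) b) Y Z X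
      = covM Dact D (fun a b => g (J a) b) X Y Z) :
    ∀ X Y, covT Ds (⇑J) X Y = covT Ds (⇑J) Y X := by

  intro X Y
  have key : ∀ W, g W (covT Ds (⇑J) X Y) = g W (covT Ds (⇑J) Y X) := by
    intro W
    have h1 := hCodG X W Y
    have h2 := hCodg Y (J W) X
    simp only [covM] at h1 h2
    simp only [covT, map_sub]
    linear_combination (-(hDs W (J Y) X)) + (hDs (J W) Y X) + (hDs W (J X) Y)
      - (hDs (J W) X Y) + (hJsym W (Ds X Y)) - (hJsym W (Ds Y X)) + h1 + h2
      - (congrArg (Dact X) (hJsym W Y)) + (congrArg (Dact Y) (hsym (J X) W))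
      + (congrArg (Dact X) (hsym Y (J W))) + (hJsym (D X W) Y)
      + (hsym (J W) (D X Y)) - (hJsym (D Y X) W) + (hsym (J W) (D Y X))
      - (hsym (J X) (D Y W)) - (hsym Y (D X (J W)))
  have hz : covT Ds (⇑J) X Y - covT Ds (⇑J) Y X = 0 := by
    apply hnd
    intro W
    rw [hsym, map_sub, key W, sub_self]
  exact sub_eq_zero.mp hz
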